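/- arXiv:1206.2522 — 2 statements merged into one kernel-verified Lean document; each statement's English description precedes it below -/
import Mathlib

section
/- The Dunkl intertwining operator satisfies V_μ(e^x) = E_μ(x), i.e., (1/B(1/2, μ)) ∫_{−1}^{1} e^{xt}(1−t)^{μ−1}(1+t)^μ dt = Σ_{n≥0} x^n/[n]_μ!. -/
/-- The deformed integer `[n]_μ = n + μ (1 - (-1)^n)`. -/
noncomputable def dIdx (μ : ℝ) (n : ℕ) : ℝ := n + μ * (1 - (-1 : ℝ) ^ n)

/-- The deformed factorial `[n]_μ!`. -/
noncomputable def dFact (μ : ℝ) : ℕ → ℝ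
  | 0 => 1
  | n + 1 => dIdx μ (n + 1) * dFact μ n

/-- The Beta function `B(a,b) = Γ(a)Γ(b)/Γ(a+b)`. -/
noncomputable def betaFn (a b : ℝ) : ℝ := Real.Gamma a * Real.Gamma b / Real.Gamma (a + b)

open MeasureTheory intervalIntegral Set

/-- `s^(μ-1) * s = s^μ` for `0 ≤ s`. -/
lemma vmu_rpow_succ {μ s : ℝ} (hμ : 0 < μ) (hs : 0 ≤ s) : s ^ (μ - 1) * s = s ^ μ := by
  rcases eq_or_lt_of_le hs with h | h
  · rw [← h]; simp [Real.zero_rpow hμ.ne']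
  · rw [← Real.rpow_add_one h.ne', sub_add_cancel]

lemma vmu_cont_rpow {μ : ℝ} (hμ : 0 < μ) : Continuous fun s : ℝ => s ^ μ :=
  continuous_id.rpow_const fun x => Or.inr hμ.le

/-- Integrability of `c t * (1-t²)^(μ-1)` on `[-1,1]` for continuous `c`. -/
lemma vmu_int {μ : ℝ} (hμ : 0 < μ) {c : ℝ → ℝ} (hc : Continuous c) :
    IntervalIntegrable (fun t => c t * (1 - t^2) ^ (μ - 1)) volume (-1) 1 := by
  have hbase : IntervalIntegrable (fun t : ℝ => t ^ (μ - 1)) volume 0 1 :=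
    intervalIntegrable_rpow' (by linarith)
  have right : IntervalIntegrable (fun t => c t * (1 - t^2) ^ (μ - 1)) volume 0 1 := by
    have h1 : IntervalIntegrable (fun t : ℝ => (1 - t) ^ (μ - 1)) volume 0 1 := by
      simpa using (hbase.comp_sub_left 1).symm
    have h2 : ContinuousOn (fun t : ℝ => c t * (1 + t) ^ (μ - 1)) (uIcc 0 1) := by
      refine hc.continuousOn.mul (ContinuousOn.rpow_const (by fun_prop) fun t ht => ?_)
      rw [uIcc_of_le (by norm_num : (0:ℝ) ≤ 1)] at ht
      exact Or.inl (by nlinarith [ht.1])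
    refine (h1.continuousOn_mul h2).congr ?_
    intro t ht; dsimp only
    rw [uIoc_of_le (by norm_num : (0:ℝ) ≤ 1)] at ht
    rw [show (1:ℝ) - t^2 = (1 - t) * (1 + t) by ring,
      Real.mul_rpow (by linarith [ht.2]) (by linarith [ht.1.le])]
    ring
  have left : IntervalIntegrable (fun t => c t * (1 - t^2) ^ (μ - 1)) volume (-1) 0 := by
    have h1 : IntervalIntegrable (fun t : ℝ => (1 + t) ^ (μ - 1)) volume (-1) 0 := by
      have := hbase.comp_add_right 1
      norm_num at this
      refine this.congr ?_
      intro t _; dsimp only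
      rw [add_comm]
    have h2 : ContinuousOn (fun t : ℝ => c t * (1 - t) ^ (μ - 1)) (uIcc (-1) 0) := by
      refine hc.continuousOn.mul (ContinuousOn.rpow_const (by fun_prop) fun t ht => ?_)
      rw [uIcc_of_le (by norm_num : (-1:ℝ) ≤ 0)] at ht
      exact Or.inl (by nlinarith [ht.2])
    refine (h1.continuousOn_mul h2).congr ?_
    intro t ht; dsimp only
    rw [uIoc_of_le (by norm_num : (-1:ℝ) ≤ 0)] at ht
    rw [show (1:ℝ) - t^2 = (1 - t) * (1 + t) by ring,
      Real.mul_rpow (by linarith [ht.2]) (by linarith [ht.1.le])]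
    ring
  exact left.trans right

noncomputable def vg (μ : ℝ) (k : ℕ) : ℝ := ∫ t in (-1:ℝ)..1, t ^ k * (1 - t^2) ^ (μ - 1)

lemma vmu_int_pow {μ : ℝ} (hμ : 0 < μ) (k : ℕ) :
    IntervalIntegrable (fun t => t ^ k * (1 - t^2) ^ (μ - 1)) volume (-1) 1 :=
  vmu_int hμ (continuous_pow k)

lemma vg_odd {μ : ℝ} (k : ℕ) (hk : Odd k) : vg μ k = 0 := by
  have h := intervalIntegral.integral_comp_neg (a := (-1:ℝ)) (b := 1)
    (fun t => t ^ k * (1 - t^2) ^ (μ - 1))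
  norm_num at h
  have h2 : ∀ t : ℝ, (-t) ^ k * (1 - t^2) ^ (μ - 1) = -(t ^ k * (1 - t^2) ^ (μ - 1)) := by
    intro t
    rw [hk.neg_pow]
    ring
  simp_rw [h2, intervalIntegral.integral_neg] at h
  rw [vg]
  linarith [h]


lemma vg_rec {μ : ℝ} (hμ : 0 < μ) (j : ℕ) :
    ((2*j+1 : ℝ) + 2*μ) * vg μ (2*j+2) = (2*j+1 : ℝ) * vg μ (2*j) := by
  set F : ℝ → ℝ := fun t => t^(2*j+1) * (1-t^2)^μ with hF
  set F' : ℝ → ℝ := fun t =>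
    (2*j+1 : ℝ) * t^(2*j) * (1-t^2)^μ + t^(2*j+1) * (-(2*t) * μ * (1-t^2)^(μ-1)) with hF'
  have hderiv : ∀ t ∈ Ioo (-1:ℝ) 1, HasDerivAt F (F' t) t := by
    intro t ht
    have h1 : HasDerivAt (fun t : ℝ => t^(2*j+1)) ((2*j+1 : ℝ) * t^(2*j)) t := by
      have := hasDerivAt_pow (2*j+1) t
      norm_num at this
      convert this using 2 <;> push_cast <;> ring
    have h2 : HasDerivAt (fun t : ℝ => 1 - t^2) (-(2*t)) t := by
      simpa using ((hasDerivAt_pow 2 t).const_sub 1)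
    have h3 : HasDerivAt (fun t : ℝ => (1-t^2)^μ) (-(2*t) * μ * (1-t^2)^(μ-1)) t :=
      h2.rpow_const (Or.inl (by nlinarith [ht.1, ht.2]))
    have h4 := h1.mul h3
    convert h4 using 1 <;> rfl
  have hcont : ContinuousOn F (Icc (-1:ℝ) 1) :=
    ((continuous_pow _).mul ((continuous_const.sub (continuous_pow 2)).rpow_const
      fun t => Or.inr hμ.le)).continuousOn
  set c : ℝ → ℝ := fun t => (2*j+1 : ℝ) * t^(2*j) * (1-t^2) - 2*μ * t^(2*j+2) with hc
  have hceq : ∀ t ∈ Icc (-1:ℝ) 1, F' t = c t * (1-t^2)^(μ-1) := by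
    intro t ht
    have h0 : (0:ℝ) ≤ 1 - t^2 := by nlinarith [ht.1, ht.2]
    have := vmu_rpow_succ hμ h0
    simp only [hF', hc]
    rw [← this]
    ring
  have hcc : Continuous c := by fun_prop
  have hint : IntervalIntegrable F' volume (-1) 1 := by
    refine (vmu_int hμ hcc).congr ?_
    intro t ht
    rw [uIoc_of_le (by norm_num : (-1:ℝ) ≤ 1)] at ht
    exact (hceq t ⟨ht.1.le, ht.2⟩).symm
  have hFTC := integral_eq_sub_of_hasDerivAt_of_le (by norm_num : (-1:ℝ) ≤ 1)
    hcont hderiv hint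
  have hF1 : F 1 = 0 := by simp [hF, Real.zero_rpow hμ.ne']
  have hFm1 : F (-1) = 0 := by
    simp only [hF]
    norm_num [Real.zero_rpow hμ.ne']
  rw [hF1, hFm1, sub_zero] at hFTC
  have hsplit : ∫ t in (-1:ℝ)..1, F' t
      = (2*j+1 : ℝ) * vg μ (2*j) + (-(2*j+1 : ℝ) - 2*μ) * vg μ (2*j+2) := by
    have hEq : EqOn F' (fun t => c t * (1-t^2)^(μ-1)) (uIcc (-1:ℝ) 1) := by
      intro t ht
      rw [uIcc_of_le (by norm_num : (-1:ℝ) ≤ 1)] at ht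
      exact hceq t ht
    rw [intervalIntegral.integral_congr hEq]
    have he : ∀ t : ℝ, c t * (1-t^2)^(μ-1)
        = (2*j+1 : ℝ) * (t^(2*j) * (1-t^2)^(μ-1))
          + (-(2*j+1 : ℝ) - 2*μ) * (t^(2*j+2) * (1-t^2)^(μ-1)) := by
      intro t; simp only [hc]; ring
    simp_rw [he]
    rw [intervalIntegral.integral_add ((vmu_int_pow hμ (2*j)).const_mul _)
      ((vmu_int_pow hμ (2*j+2)).const_mul _),
      intervalIntegral.integral_const_mul, intervalIntegral.integral_const_mul]
    rfl
  rw [hsplit] at hFTC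
  linarith [hFTC]

lemma realBeta {a b : ℝ} (ha : 0 < a) (hb : 0 < b) :
    ∫ s in (0:ℝ)..1, s ^ (a - 1) * (1 - s) ^ (b - 1) =
      Real.Gamma a * Real.Gamma b / Real.Gamma (a + b) := by
  have hG : (0:ℝ) < Real.Gamma (a + b) := Real.Gamma_pos_of_pos (by linarith)
  have h1 : Complex.Gamma a * Complex.Gamma b =
      Complex.Gamma (a + b) * Complex.betaIntegral a b :=
    Complex.Gamma_mul_Gamma_eq_betaIntegral (by simpa using ha) (by simpa using hb)
  have h2 : Complex.betaIntegral (a : ℂ) (b : ℂ) =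
      ((∫ s in (0:ℝ)..1, s ^ (a - 1) * (1 - s) ^ (b - 1) : ℝ) : ℂ) := by
    rw [Complex.betaIntegral, ← intervalIntegral.integral_ofReal]
    refine intervalIntegral.integral_congr fun s hs => ?_
    rw [Set.uIcc_of_le (by norm_num : (0:ℝ) ≤ 1)] at hs
    rw [Complex.ofReal_mul, Complex.ofReal_cpow hs.1,
      Complex.ofReal_cpow (by linarith [hs.2] : (0:ℝ) ≤ 1 - s)]
    push_cast
    ring
  rw [h2] at h1
  rw [← Complex.ofReal_add, Complex.Gamma_ofReal, Complex.Gamma_ofReal, Complex.Gamma_ofReal,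
    ← Complex.ofReal_mul, ← Complex.ofReal_mul] at h1
  have h3 : Real.Gamma a * Real.Gamma b =
      Real.Gamma (a + b) * ∫ s in (0:ℝ)..1, s ^ (a - 1) * (1 - s) ^ (b - 1) := by
    exact_mod_cast h1
  field_simp
  linarith [h3]

lemma vg_zero {μ : ℝ} (hμ : 0 < μ) : vg μ 0 = betaFn (1/2) μ := by
  have h00 : vg μ 0 = ∫ t in (-1:ℝ)..1, (1 - t^2) ^ (μ - 1) := by
    rw [vg]; simp
  rw [h00]
  have hc := intervalIntegral.integral_comp_mul_add
    (f := fun t : ℝ => (1 - t^2) ^ (μ - 1)) (a := 0) (b := 1) (two_ne_zero) (-1)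
  norm_num at hc
  -- hc : ∫ s in 0..1, (1 - (2*s - 1)^2)^(μ-1) = 2⁻¹ * ∫ t in -1..1, (1-t^2)^(μ-1)
  have he : ∫ s in (0:ℝ)..1, (1 - (2*s + -1)^2) ^ (μ - 1)
      = (4:ℝ)^(μ-1) * ∫ s in (0:ℝ)..1, s ^ (μ - 1) * (1 - s) ^ (μ - 1) := by
    rw [← intervalIntegral.integral_const_mul]
    refine intervalIntegral.integral_congr fun s hs => ?_
    rw [Set.uIcc_of_le (by norm_num : (0:ℝ) ≤ 1)] at hs
    have h1 : (1 : ℝ) - (2*s + -1)^2 = 4 * (s * (1 - s)) := by ring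
    rw [h1, Real.mul_rpow (by norm_num) (mul_nonneg hs.1 (by linarith [hs.2])),
      Real.mul_rpow hs.1 (by linarith [hs.2])]
  rw [he, realBeta hμ hμ] at hc
  have hI : ∫ t in (-1:ℝ)..1, (1 - t^2) ^ (μ - 1)
      = 2 * ((4:ℝ)^(μ-1) * (Real.Gamma μ * Real.Gamma μ / Real.Gamma (μ + μ))) := by
    rw [hc]; ring
  rw [hI, betaFn, Real.Gamma_one_half_eq, show (1:ℝ)/2 + μ = μ + 1/2 by ring,
    show μ + μ = 2*μ by ring]
  have hdup := Real.Gamma_mul_Gamma_add_half μ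
  have h24 : (2:ℝ) * ((4:ℝ)^(μ-1) * (2:ℝ)^(1-2*μ)) = 1 := by
    have h2two : (2:ℝ)^(2:ℝ) = 4 := by
      rw [Real.rpow_two]; norm_num
    have h4 : (4:ℝ)^(μ-1) = (2:ℝ)^(2*(μ-1)) := by
      rw [Real.rpow_mul zero_le_two, h2two]
    rw [h4, ← Real.rpow_add two_pos]
    rw [show 2*(μ-1) + (1-2*μ) = -1 by ring, Real.rpow_neg_one]
    norm_num
  have hG1 : 0 < Real.Gamma μ := Real.Gamma_pos_of_pos hμ
  have hG2 : 0 < Real.Gamma (μ + 1/2) := Real.Gamma_pos_of_pos (by linarith)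
  have hG3 : 0 < Real.Gamma (2*μ) := Real.Gamma_pos_of_pos (by linarith)
  set Ga := Real.Gamma μ
  set Gb := Real.Gamma (μ + 1/2)
  set Gc := Real.Gamma (2*μ)
  set q := (2:ℝ)^(1-2*μ)
  set p := (4:ℝ)^(μ-1)
  set r := Real.sqrt Real.pi
  field_simp
  linear_combination (2*p) * hdup + (r*Gc) * h24


lemma dIdx_even (μ : ℝ) (j : ℕ) : dIdx μ (2*j) = (2*j : ℕ) := by
  rw [dIdx, Even.neg_one_pow ⟨j, by ring⟩]; ring

lemma dIdx_odd (μ : ℝ) (j : ℕ) : dIdx μ (2*j+1) = (2*j+1 : ℕ) + 2*μ := by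
  rw [dIdx, Odd.neg_one_pow ⟨j, by ring⟩]; push_cast; ring

lemma dFact_pos {μ : ℝ} (hμ : 0 < μ) : ∀ n, 0 < dFact μ n := by
  intro n
  induction n with
  | zero => norm_num [dFact]
  | succ m ih =>
      rw [dFact]
      have hp : 0 < dIdx μ (m+1) := by
        rcases Nat.even_or_odd (m+1) with ⟨k, hk⟩ | ⟨k, hk⟩
        · rw [show m + 1 = 2*k by omega, dIdx_even]
          have hk0 : 0 < k := by omega
          have : (0:ℝ) < (2*k : ℕ) := by exact_mod_cast (by omega : 0 < 2*k)
          linarith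
        · rw [show m + 1 = 2*k+1 by omega, dIdx_odd]
          positivity
      exact mul_pos hp ih

lemma betaFn_pos {μ : ℝ} (hμ : 0 < μ) : 0 < betaFn (1/2) μ := by
  rw [betaFn]
  have h1 : 0 < Real.Gamma (1/2) := Real.Gamma_pos_of_pos (by norm_num)
  have h2 : 0 < Real.Gamma μ := Real.Gamma_pos_of_pos hμ
  have h3 : 0 < Real.Gamma (1/2 + μ) := Real.Gamma_pos_of_pos (by linarith)
  positivity

lemma vg_even_closed {μ : ℝ} (hμ : 0 < μ) :
    ∀ j : ℕ, vg μ (2*j) = betaFn (1/2) μ * Nat.factorial (2*j) / dFact μ (2*j) := by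
  intro j
  induction j with
  | zero => simp [vg_zero hμ, dFact]
  | succ m ih =>
      have hidx : 2*(m+1) = 2*m+2 := by ring
      rw [hidx]
      have hrec := vg_rec hμ m
      have hpos : (0:ℝ) < (2*m+1 : ℝ) + 2*μ := by positivity
      have hd2 : dFact μ (2*m+2) = ((2*m+2 : ℝ)) * ((2*m+1 : ℝ) + 2*μ) * dFact μ (2*m) := by
        rw [show 2*m+2 = (2*m+1) + 1 by ring, dFact, dFact,
          show 2*m + 1 + 1 = 2*(m+1) by ring, dIdx_even,
          dIdx_odd]
        push_cast; ring
      have hfac : (Nat.factorial (2*m+2) : ℝ) = ((2*m+2 : ℝ)) * ((2*m+1 : ℝ)) * (Nat.factorial (2*m) : ℝ) := by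
        rw [show 2*m+2 = (2*m+1) + 1 by ring, Nat.factorial_succ, Nat.factorial_succ]
        push_cast; ring
      have hgoal : vg μ (2*m+2) = ((2*m+1 : ℝ)) / ((2*m+1 : ℝ) + 2*μ) * vg μ (2*m) := by
        field_simp at hrec ⊢
        linarith [hrec]
      rw [hgoal, ih, hd2, hfac]
      have hdpos := dFact_pos hμ (2*m)
      field_simp

lemma vg_key {μ : ℝ} (hμ : 0 < μ) (n : ℕ) :
    vg μ n + vg μ (n+1) = betaFn (1/2) μ * Nat.factorial n / dFact μ n := by
  rcases Nat.even_or_odd n with ⟨j, hj⟩ | ⟨j, hj⟩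
  · rw [show n = 2*j by omega]
    rw [vg_odd (2*j+1) ⟨j, by ring⟩, vg_even_closed hμ j, add_zero]
  · rw [show n = 2*j+1 by omega]
    rw [vg_odd (2*j+1) ⟨j, by ring⟩, show 2*j+1+1 = 2*(j+1) by ring,
      vg_even_closed hμ (j+1), zero_add]
    have h1 : dFact μ (2*(j+1)) = ((2*(j+1) : ℕ) : ℝ) * dFact μ (2*j+1) := by
      rw [show 2*(j+1) = (2*j+1)+1 by ring, dFact, show 2*j+1+1 = 2*(j+1) by ring, dIdx_even]
    have h2 : (Nat.factorial (2*(j+1)) : ℝ) = ((2*(j+1) : ℕ) : ℝ) * Nat.factorial (2*j+1) := by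
      rw [show 2*(j+1) = (2*j+1)+1 by ring, Nat.factorial_succ]
      push_cast; ring
    rw [h1, h2]
    have hd := (dFact_pos hμ (2*j+1)).ne'
    have hc : ((2*(j+1):ℕ):ℝ) ≠ 0 := by positivity
    field_simp

lemma expser (y : ℝ) : ∑' n : ℕ, y^n / (Nat.factorial n) = Real.exp y := by
  rw [Real.exp_eq_exp_ℝ, NormedSpace.exp_eq_tsum_div]


/-- `V_μ(e^x) = E_μ(x)`. -/
theorem Vmu_exp (μ : ℝ) (hμ : 0 < μ) (x : ℝ) :
    (1 / betaFn (1 / 2) μ) *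
        ∫ t in (-1 : ℝ)..1, Real.exp (x * t) * (1 - t) ^ (μ - 1) * (1 + t) ^ μ =
      ∑' n : ℕ, x ^ n / dFact μ n := by
  have hBpos := betaFn_pos hμ
  set B := betaFn (1/2) μ with hB
  have hBne : B ≠ 0 := hBpos.ne'
  -- Step 1: rewrite the integrand
  have hstep1 : (∫ t in (-1:ℝ)..1, Real.exp (x*t) * (1-t)^(μ-1) * (1+t)^μ)
      = ∫ t in (-1:ℝ)..1, (Real.exp (x*t) * (1+t)) * (1-t^2)^(μ-1) := by
    refine intervalIntegral.integral_congr fun t ht => ?_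
    rw [uIcc_of_le (by norm_num : (-1:ℝ) ≤ 1)] at ht
    have h1 : (0:ℝ) ≤ 1 - t := by linarith [ht.2]
    have h2 : (0:ℝ) ≤ 1 + t := by linarith [ht.1]
    have key : (1-t)^(μ-1) * (1+t)^μ = (1+t) * (1-t^2)^(μ-1) := by
      calc (1-t)^(μ-1) * (1+t)^μ = (1-t)^(μ-1) * ((1+t)^(μ-1) * (1+t)) := by
            rw [vmu_rpow_succ hμ h2]
        _ = ((1-t)*(1+t))^(μ-1) * (1+t) := by rw [Real.mul_rpow h1 h2]; ring
        _ = (1+t) * (1-t^2)^(μ-1) := by rw [show (1-t)*(1+t) = 1-t^2 by ring]; ring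
    rw [mul_assoc, key]; ring
  -- The summand functions
  set F : ℕ → ℝ → ℝ :=
    fun n t => (x^n / (Nat.factorial n) * t^n * (1+t)) * (1 - t^2)^(μ-1) with hF
  have hFint : ∀ n : ℕ, IntegrableOn (F n) (Ioc (-1:ℝ) 1) volume := by
    intro n
    have h := (vmu_int hμ
      (show Continuous fun t:ℝ => x^n / (Nat.factorial n) * t^n * (1+t) by fun_prop)).def'
    rwa [uIoc_of_le (by norm_num : (-1:ℝ) ≤ 1)] at h
  have hKint : IntegrableOn (fun t : ℝ => (1+t) * (1-t^2)^(μ-1)) (Ioc (-1:ℝ) 1) volume := by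
    have h := (vmu_int hμ (show Continuous fun t:ℝ => 1+t by fun_prop)).def'
    rwa [uIoc_of_le (by norm_num : (-1:ℝ) ≤ 1)] at h
  set K : ℝ := ∫ t in Ioc (-1:ℝ) 1, (1+t) * (1-t^2)^(μ-1) with hK
  have hbound : ∀ n, (∫ t in Ioc (-1:ℝ) 1, ‖F n t‖) ≤ |x|^n / (Nat.factorial n) * K := by
    intro n
    have hmono : (∫ t in Ioc (-1:ℝ) 1, ‖F n t‖)
        ≤ ∫ t in Ioc (-1:ℝ) 1, |x|^n / (Nat.factorial n) * ((1+t) * (1-t^2)^(μ-1)) := by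
      refine setIntegral_mono_on ((hFint n).norm) (hKint.const_mul _) measurableSet_Ioc ?_
      intro t ht
      have h1 : (0:ℝ) ≤ 1 + t := by linarith [ht.1]
      have h2 : (0:ℝ) ≤ 1 - t^2 := by nlinarith [ht.1, ht.2]
      set R := (1 - t^2)^(μ-1) with hR
      have hRnn : 0 ≤ R := Real.rpow_nonneg h2 _
      have htn : |t|^n ≤ 1 := pow_le_one₀ (abs_nonneg t) (abs_le.mpr ⟨ht.1.le, ht.2⟩)
      have hfac : (0:ℝ) ≤ |x|^n / (Nat.factorial n) := by positivity
      have hnorm : ‖F n t‖ = |x|^n / (Nat.factorial n) * |t|^n * (1+t) * R := by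
        simp only [hF, Real.norm_eq_abs, abs_mul, abs_div, abs_pow]
        rw [abs_of_nonneg h1, abs_of_nonneg hRnn, Nat.abs_cast]
      rw [hnorm]
      have key := mul_nonneg (mul_nonneg hfac (mul_nonneg h1 hRnn)) (sub_nonneg.mpr htn)
      nlinarith [key]
    calc (∫ t in Ioc (-1:ℝ) 1, ‖F n t‖)
        ≤ ∫ t in Ioc (-1:ℝ) 1, |x|^n / (Nat.factorial n) * ((1+t) * (1-t^2)^(μ-1)) := hmono
      _ = |x|^n / (Nat.factorial n) * K := by rw [MeasureTheory.integral_const_mul]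
  have hFsum : Summable fun n => ∫ t in Ioc (-1:ℝ) 1, ‖F n t‖ := by
    refine Summable.of_nonneg_of_le (fun n => integral_nonneg fun t => norm_nonneg _)
      hbound ?_
    exact (Real.summable_pow_div_factorial |x|).mul_right K
  have hHS := hasSum_integral_of_summable_integral_norm hFint hFsum
  -- value of each integral
  have hval : ∀ n, (∫ t in Ioc (-1:ℝ) 1, F n t) = B * (x^n / dFact μ n) := by
    intro n
    rw [← intervalIntegral.integral_of_le (by norm_num : (-1:ℝ) ≤ 1)]
    have h2 : ∀ t : ℝ, F n t = (x^n / (Nat.factorial n)) * (t^n * (1-t^2)^(μ-1))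
        + (x^n / (Nat.factorial n)) * (t^(n+1) * (1-t^2)^(μ-1)) := by
      intro t; simp only [hF]; ring
    simp_rw [h2]
    rw [intervalIntegral.integral_add ((vmu_int_pow hμ n).const_mul _)
      ((vmu_int_pow hμ (n+1)).const_mul _),
      intervalIntegral.integral_const_mul, intervalIntegral.integral_const_mul, ← mul_add,
      show (∫ t in (-1:ℝ)..1, t^n * (1-t^2)^(μ-1)) = vg μ n from rfl,
      show (∫ t in (-1:ℝ)..1, t^(n+1) * (1-t^2)^(μ-1)) = vg μ (n+1) from rfl,
      vg_key hμ n]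
    have hn : ((Nat.factorial n : ℕ) : ℝ) ≠ 0 := Nat.cast_ne_zero.mpr (Nat.factorial_ne_zero n)
    have hd := (dFact_pos hμ n).ne'
    field_simp
    ring
  -- the tsum of F
  have htsum : ∀ t : ℝ, (∑' n, F n t) = (Real.exp (x*t) * (1+t)) * (1-t^2)^(μ-1) := by
    intro t
    have h1 : ∀ n : ℕ, F n t = ((x*t)^n / (Nat.factorial n)) * ((1+t) * (1-t^2)^(μ-1)) := by
      intro n; simp only [hF, mul_pow]; ring
    rw [tsum_congr h1, tsum_mul_right, expser]
    ring
  have h3 : (∫ t in Ioc (-1:ℝ) 1, (∑' n, F n t))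
      = ∫ t in (-1:ℝ)..1, (Real.exp (x*t) * (1+t)) * (1-t^2)^(μ-1) := by
    rw [← intervalIntegral.integral_of_le (by norm_num : (-1:ℝ) ≤ 1)]
    exact intervalIntegral.integral_congr fun t _ => htsum t
  rw [funext hval, h3] at hHS
  have hc : HasSum (fun n => x^n / dFact μ n)
      ((∫ t in (-1:ℝ)..1, (Real.exp (x*t) * (1+t)) * (1-t^2)^(μ-1)) / B) := by
    have := hHS.div_const B
    simpa [mul_div_assoc, mul_div_cancel_left₀ _ hBne] using this
  rw [hstep1, hc.tsum_eq]
  ring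
end

section
/- The intertwining operator V_μ intertwines d/dx with the Dunkl operator on polynomials: D_μ ∘ V_μ = V_μ ∘ d/dx, where V_μ(f)(x) = (1/B(1/2,μ)) ∫_{−1}^1 f(xt)(1−t)^{μ−1}(1+t)^μ dt. -/
/-- The Dunkl operator `D_μ f(x) = f'(x) + μ (f(x) - f(-x))/x`. -/
noncomputable def dunkl (μ : ℝ) (f : ℝ → ℝ) (x : ℝ) : ℝ :=
  deriv f x + μ * (f x - f (-x)) / x

/-- The Dunkl intertwining operator. -/
noncomputable def Vmu (μ : ℝ) (f : ℝ → ℝ) (x : ℝ) : ℝ :=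
  (1 / betaFn (1 / 2) μ) * ∫ t in (-1 : ℝ)..1, f (x * t) * (1 - t) ^ (μ - 1) * (1 + t) ^ μ


section DunklAux

open MeasureTheory intervalIntegral Set Finset

lemma aux_int {a b : ℝ} (ha : -1 < a) (hb : -1 < b) {g : ℝ → ℝ} (hg : Continuous g) :
    IntervalIntegrable (fun t => g t * (1 - t) ^ a * (1 + t) ^ b) volume (-1) 1 := by
  have h1 : IntervalIntegrable (fun t : ℝ => (1 + t) ^ b) volume (-1) 0 := by
    have := (intervalIntegrable_rpow' hb (a := 0) (b := 1)).comp_add_left 1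
    simpa using this
  have h2 : IntervalIntegrable (fun t : ℝ => (1 - t) ^ a) volume 0 1 := by
    have := (intervalIntegrable_rpow' ha (a := 0) (b := 1)).comp_sub_left 1
    simpa using this.symm
  have c1 : ContinuousOn (fun t : ℝ => g t * (1 - t) ^ a) (Set.uIcc (-1) 0) := by
    apply hg.continuousOn.mul
    apply ContinuousOn.rpow_const (continuous_const.sub continuous_id).continuousOn
    intro t ht
    rw [Set.uIcc_of_le (by norm_num : (-1:ℝ) ≤ 0)] at ht
    left; intro h; simp only [Pi.sub_apply, id_eq] at h; linarith [ht.2]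
  have c2 : ContinuousOn (fun t : ℝ => g t * (1 + t) ^ b) (Set.uIcc 0 1) := by
    apply hg.continuousOn.mul
    apply ContinuousOn.rpow_const (continuous_const.add continuous_id).continuousOn
    intro t ht
    rw [Set.uIcc_of_le (by norm_num : (0:ℝ) ≤ 1)] at ht
    left; intro h; simp only [Pi.add_apply, id_eq] at h; linarith [ht.1]
  have L : IntervalIntegrable (fun t => g t * (1 - t) ^ a * (1 + t) ^ b) volume (-1) 0 :=
    h1.continuousOn_mul c1
  have R : IntervalIntegrable (fun t => g t * (1 - t) ^ a * (1 + t) ^ b) volume 0 1 := by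
    have := h2.continuousOn_mul c2
    have e : (fun t : ℝ => g t * (1 + t) ^ b * (1 - t) ^ a)
        = fun t => g t * (1 - t) ^ a * (1 + t) ^ b := by funext t; ring
    rwa [e] at this
  exact L.trans R

noncomputable def Jmom (μ : ℝ) (k : ℕ) : ℝ := ∫ t in (-1:ℝ)..1, t ^ k * ((1 - t) * (1 + t)) ^ (μ - 1)
noncomputable def mMom (μ : ℝ) (n : ℕ) : ℝ := ∫ t in (-1:ℝ)..1, t ^ n * (1 - t) ^ (μ - 1) * (1 + t) ^ μ

lemma F2int {e : ℝ} (he : -1 < e) (k : ℕ) :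
    IntervalIntegrable (fun t => t ^ k * ((1 - t) * (1 + t)) ^ e) volume (-1) 1 := by
  refine (aux_int he he (continuous_pow k)).congr ?_
  intro t ht
  rw [Set.uIoc_of_le (by norm_num : (-1:ℝ) ≤ 1)] at ht
  show t ^ k * (1 - t) ^ e * (1 + t) ^ e = t ^ k * ((1 - t) * (1 + t)) ^ e
  rw [Real.mul_rpow (by linarith [ht.2] : (0:ℝ) ≤ 1 - t) (by linarith [ht.1] : (0:ℝ) ≤ 1 + t),
    mul_assoc]

lemma Jodd (μ : ℝ) {k : ℕ} (hk : Odd k) : Jmom μ k = 0 := by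
  have h : ∀ t : ℝ, (-t) ^ k * ((1 - -t) * (1 + -t)) ^ (μ - 1)
      = -(t ^ k * ((1 - t) * (1 + t)) ^ (μ - 1)) := by
    intro t
    rw [show (1 - -t) * (1 + -t) = (1 - t) * (1 + t) by ring, hk.neg_pow]
    ring
  have h2 := intervalIntegral.integral_comp_neg (a := (-1:ℝ)) (b := 1)
    (fun t => t ^ k * ((1 - t) * (1 + t)) ^ (μ - 1))
  simp only [h, intervalIntegral.integral_neg, neg_neg] at h2
  have : -Jmom μ k = Jmom μ k := h2
  linarith

lemma mJ {μ : ℝ} (hμ : 0 < μ) (n : ℕ) : mMom μ n = Jmom μ n + Jmom μ (n + 1) := by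
  have h : ∀ t ∈ Set.uIcc (-1:ℝ) 1,
      t ^ n * (1 - t) ^ (μ - 1) * (1 + t) ^ μ
      = t ^ n * ((1 - t) * (1 + t)) ^ (μ - 1) + t ^ (n + 1) * ((1 - t) * (1 + t)) ^ (μ - 1) := by
    intro t ht
    rw [Set.uIcc_of_le (by norm_num : (-1:ℝ) ≤ 1)] at ht
    have h1 : (0:ℝ) ≤ 1 - t := by linarith [ht.2]
    have h2 : (0:ℝ) ≤ 1 + t := by linarith [ht.1]
    rw [Real.mul_rpow h1 h2,
      show μ = 1 + (μ - 1) by ring, Real.rpow_add' h2 (by simpa using hμ.ne'), Real.rpow_one]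
    ring_nf
  rw [mMom, intervalIntegral.integral_congr h, intervalIntegral.integral_add
    (F2int (by linarith) n) (F2int (by linarith) (n+1))]
  rfl

lemma Jrec {μ : ℝ} (hμ : 0 < μ) (k : ℕ) :
    ((k:ℝ) + 1) * Jmom μ k = (((k:ℝ) + 1) + 2 * μ) * Jmom μ (k + 2) := by
  set n := k + 1 with hn
  set g : ℝ → ℝ := fun t => t ^ n * ((1 - t) * (1 + t)) ^ μ with hg
  set g' : ℝ → ℝ := fun t => (n:ℝ) * t ^ k * ((1 - t) * (1 + t)) ^ μ
    + t ^ n * (μ * ((1 - t) * (1 + t)) ^ (μ - 1) * (-1 * (1 + t) + (1 - t) * 1)) with hg'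
  have hderiv : ∀ t ∈ Set.Ioo (-1:ℝ) 1, HasDerivAt g (g' t) t := by
    intro t ht
    have hpos : 0 < (1 - t) * (1 + t) := by nlinarith [ht.1, ht.2]
    have h1 : HasDerivAt (fun t : ℝ => 1 - t) (-1) t := by
      simpa using (hasDerivAt_id t).const_sub 1
    have h2 : HasDerivAt (fun t : ℝ => 1 + t) 1 t := by
      simpa using (hasDerivAt_id t).const_add 1
    have hu : HasDerivAt (fun t : ℝ => (1 - t) * (1 + t)) (-1 * (1 + t) + (1 - t) * 1) t :=
      h1.mul h2
    have hr : HasDerivAt (fun y : ℝ => y ^ μ) (μ * ((1 - t) * (1 + t)) ^ (μ - 1))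
        ((1 - t) * (1 + t)) := Real.hasDerivAt_rpow_const (Or.inl hpos.ne')
    have hcomp := hr.comp t hu
    have := (hasDerivAt_pow n t).mul hcomp
    exact this.congr_deriv (by simp only [hg', hn, Nat.add_sub_cancel, Function.comp_apply])
  have hcont : ContinuousOn g (Set.Icc (-1:ℝ) 1) := by
    apply Continuous.continuousOn
    exact (continuous_pow n).mul ((Real.continuous_rpow_const hμ.le).comp
      ((continuous_const.sub continuous_id).mul (continuous_const.add continuous_id)))
  have hint : IntervalIntegrable g' volume (-1) 1 := by
    refine (((F2int (by linarith : (-1:ℝ) < μ) k).const_mul (n:ℝ)).add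
      ((F2int (by linarith : (-1:ℝ) < μ - 1) (k + 2)).const_mul (-2 * μ))).congr ?_
    intro t _
    simp only [hg', hn]
    ring
  have hftc := intervalIntegral.integral_eq_sub_of_hasDeriv_right_of_le (by norm_num)
    hcont (fun t ht => (hderiv t ht).hasDerivWithinAt) hint
  have hg1 : g 1 = 0 := by
    simp [hg, Real.zero_rpow hμ.ne']
  have hgm1 : g (-1) = 0 := by
    simp [hg, Real.zero_rpow hμ.ne']
  rw [hg1, hgm1, sub_zero] at hftc
  -- split the integral
  have hsplit : (∫ t in (-1:ℝ)..1, g' t)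
      = ((n:ℝ) * ∫ t in (-1:ℝ)..1, t ^ k * ((1 - t) * (1 + t)) ^ μ)
        + (-2 * μ) * Jmom μ (k + 2) := by
    have e : ∀ t ∈ Set.uIcc (-1:ℝ) 1, g' t
        = (n:ℝ) * (t ^ k * ((1 - t) * (1 + t)) ^ μ)
          + (-2 * μ) * (t ^ (k + 2) * ((1 - t) * (1 + t)) ^ (μ - 1)) := by
      intro t _
      simp only [hg', hn]
      ring
    rw [intervalIntegral.integral_congr e, intervalIntegral.integral_add
      ((F2int (by linarith : (-1:ℝ) < μ) k).const_mul _)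
      ((F2int (by linarith : (-1:ℝ) < μ - 1) (k + 2)).const_mul _),
      intervalIntegral.integral_const_mul, intervalIntegral.integral_const_mul]
    rfl
  have hmu : (∫ t in (-1:ℝ)..1, t ^ k * ((1 - t) * (1 + t)) ^ μ)
      = Jmom μ k - Jmom μ (k + 2) := by
    have e : ∀ t ∈ Set.uIcc (-1:ℝ) 1, t ^ k * ((1 - t) * (1 + t)) ^ μ
        = t ^ k * ((1 - t) * (1 + t)) ^ (μ - 1)
          - t ^ (k + 2) * ((1 - t) * (1 + t)) ^ (μ - 1) := by
      intro t ht
      rw [Set.uIcc_of_le (by norm_num : (-1:ℝ) ≤ 1)] at ht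
      have hu0 : (0:ℝ) ≤ (1 - t) * (1 + t) := by nlinarith [ht.1, ht.2]
      rw [show μ = 1 + (μ - 1) by ring, Real.rpow_add' hu0 (by simpa using hμ.ne'),
        Real.rpow_one]
      ring_nf
    rw [intervalIntegral.integral_congr e, intervalIntegral.integral_sub
      (F2int (by linarith : (-1:ℝ) < μ - 1) k) (F2int (by linarith : (-1:ℝ) < μ - 1) (k + 2))]
    rfl
  rw [hsplit, hmu] at hftc
  have : (n:ℝ) = (k:ℝ) + 1 := by simp [hn]
  rw [this] at hftc
  linarith

lemma momRec {μ : ℝ} (hμ : 0 < μ) (k : ℕ) :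
    (((k:ℝ) + 1) + μ * (1 - (-1:ℝ) ^ (k + 1))) * mMom μ (k + 1) = ((k:ℝ) + 1) * mMom μ k := by
  rcases Nat.even_or_odd k with hk | hk
  · have hodd : Odd (k + 1) := hk.add_one
    rw [mJ hμ, mJ hμ, Jodd μ hodd, hodd.neg_one_pow]
    have := Jrec hμ k
    ring_nf
    ring_nf at this
    linarith
  · have he : Even (k + 1) := hk.add_one
    have hodd2 : Odd (k + 1 + 1) := by
      obtain ⟨j, hj⟩ := hk; exact ⟨j + 1, by omega⟩
    rw [mJ hμ, mJ hμ, Jodd μ hk, Jodd μ hodd2, he.neg_one_pow]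
    ring

lemma hexp {μ : ℝ} (hμ : 0 < μ) (q : Polynomial ℝ) {N : ℕ} (hN : q.natDegree < N) (y : ℝ) :
    (∫ t in (-1:ℝ)..1, q.eval (y * t) * (1 - t) ^ (μ - 1) * (1 + t) ^ μ)
      = ∑ n ∈ Finset.range N, q.coeff n * y ^ n * mMom μ n := by
  have h1 : ∀ t : ℝ, q.eval (y * t) * (1 - t) ^ (μ - 1) * (1 + t) ^ μ
      = ∑ n ∈ Finset.range N, q.coeff n * y ^ n * (t ^ n * (1 - t) ^ (μ - 1) * (1 + t) ^ μ) := by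
    intro t
    rw [Polynomial.eval_eq_sum_range' hN, Finset.sum_mul, Finset.sum_mul]
    refine Finset.sum_congr rfl fun n _ => ?_
    rw [mul_pow]; ring
  simp only [h1]
  rw [intervalIntegral.integral_finset_sum]
  · exact Finset.sum_congr rfl fun n _ => by
      rw [intervalIntegral.integral_const_mul]; rfl
  · intro n _
    exact (aux_int (by linarith) (by linarith) (continuous_pow n)).const_mul _

lemma keySum {μ : ℝ} (hμ : 0 < μ) (p : Polynomial ℝ) {x : ℝ} (hx : x ≠ 0) {N : ℕ}
    (hNp : p.natDegree < N) :
    ∑ n ∈ Finset.range N, (p.coeff n * mMom μ n * ((n:ℝ) * x ^ (n - 1))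
        + μ * (p.coeff n * mMom μ n * x ^ n - p.coeff n * mMom μ n * (-x) ^ n) / x)
      = ∑ n ∈ Finset.range N, ((n:ℝ) + 1) * p.coeff (n + 1) * mMom μ n * x ^ n := by
  set f : ℕ → ℝ := fun n => p.coeff n * mMom μ n * ((n:ℝ) * x ^ (n - 1))
    + μ * (p.coeff n * mMom μ n * x ^ n - p.coeff n * mMom μ n * (-x) ^ n) / x with hf
  have htop : f N = 0 := by
    rw [hf]
    simp only [Polynomial.coeff_eq_zero_of_natDegree_lt hNp]
    ring
  have h0 : f 0 = 0 := by
    rw [hf]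
    norm_num
  calc ∑ n ∈ Finset.range N, f n = ∑ n ∈ Finset.range (N + 1), f n := by
        rw [Finset.sum_range_succ, htop, add_zero]
    _ = ∑ k ∈ Finset.range N, f (k + 1) + f 0 := Finset.sum_range_succ' f N
    _ = ∑ n ∈ Finset.range N, ((n:ℝ) + 1) * p.coeff (n + 1) * mMom μ n * x ^ n := by
        rw [h0, add_zero]
        refine Finset.sum_congr rfl fun k _ => ?_
        rw [hf]
        simp only [Nat.add_sub_cancel]
        rw [show ((-x) ^ (k + 1) : ℝ) = (-1:ℝ) ^ (k + 1) * x ^ (k + 1) from by rw [neg_pow]]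
        push_cast
        field_simp
        linear_combination (p.coeff (k + 1) * x ^ (k + 1)) * momRec hμ k

end DunklAux

open MeasureTheory intervalIntegral Set Finset in
/-- `D_μ ∘ V_μ = V_μ ∘ d/dx` on polynomial functions. -/
theorem dunkl_Vmu_intertwine (μ : ℝ) (hμ : 0 < μ) (p : Polynomial ℝ) (x : ℝ) (hx : x ≠ 0) :
    dunkl μ (Vmu μ fun y => p.eval y) x = Vmu μ (fun y => (Polynomial.derivative p).eval y) x := by
  classical
  set c := 1 / betaFn (1 / 2) μ with hc
  set N := p.natDegree + 1 with hNdef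
  have hNp : p.natDegree < N := by omega
  have hNp' : (Polynomial.derivative p).natDegree < N :=
    lt_of_le_of_lt (le_trans (Polynomial.natDegree_derivative_le p) (Nat.sub_le _ _)) hNp
  have hVp : (Vmu μ fun y => p.eval y)
      = fun y => c * ∑ n ∈ Finset.range N, p.coeff n * mMom μ n * y ^ n := by
    funext y
    rw [Vmu, hexp hμ p hNp y]
    congr 1
    exact Finset.sum_congr rfl fun n _ => by ring
  have hd : HasDerivAt (fun y => c * ∑ n ∈ Finset.range N, p.coeff n * mMom μ n * y ^ n)
      (c * ∑ n ∈ Finset.range N, p.coeff n * mMom μ n * ((n:ℝ) * x ^ (n - 1))) x :=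
    HasDerivAt.const_mul c (HasDerivAt.fun_sum fun n _ => (hasDerivAt_pow n x).const_mul _)
  have hRHS : Vmu μ (fun y => (Polynomial.derivative p).eval y) x
      = c * ∑ n ∈ Finset.range N, ((n:ℝ) + 1) * p.coeff (n + 1) * mMom μ n * x ^ n := by
    rw [Vmu, hexp hμ _ hNp' x]
    congr 1
    refine Finset.sum_congr rfl fun n _ => ?_
    rw [Polynomial.coeff_derivative]
    push_cast
    ring
  rw [dunkl, hVp, hd.deriv, hRHS]
  simp only []
  have hcomb : ∑ n ∈ Finset.range N, (p.coeff n * mMom μ n * ((n:ℝ) * x ^ (n - 1))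
        + μ * (p.coeff n * mMom μ n * x ^ n - p.coeff n * mMom μ n * (-x) ^ n) / x)
      = (∑ n ∈ Finset.range N, p.coeff n * mMom μ n * ((n:ℝ) * x ^ (n - 1)))
        + μ * ((∑ n ∈ Finset.range N, p.coeff n * mMom μ n * x ^ n)
          - ∑ n ∈ Finset.range N, p.coeff n * mMom μ n * (-x) ^ n) / x := by
    rw [Finset.sum_add_distrib]
    congr 1
    rw [← Finset.sum_div, ← Finset.mul_sum, Finset.sum_sub_distrib]
  have hkey := keySum hμ p hx hNp
  rw [hcomb] at hkey
  linear_combination c * hkey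
end
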